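/- Let u : [t₀, T] → ℝ^d be differentiable and satisfy u̇(t) = B(t) + C(t) u(t) with u(t₀) = 0, where ‖B(t)‖ ≤ A_θ and ‖C(t)‖ (operator norm) ≤ A_x for all t ∈ [t₀, T], with A_θ, A_x > 0. Then for every t ∈ [t₀, T], ‖u(t)‖ ≤ sqrt( (A_θ/(A_θ + 2A_x)) (e^{(A_θ + 2A_x)(T − t₀)} − 1) ). -/

import Mathlib

open Set Real

/-- Grönwall-type bound for a linear inhomogeneous ODE `u̇ = B(t) + C(t) u(t)`, `u(t₀) = 0`,
with `‖B(t)‖ ≤ Aθ` and `‖C(t)‖ ≤ Ax`: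
`‖u(t)‖ ≤ sqrt((Aθ/(Aθ + 2Ax))(exp((Aθ + 2Ax)(T - t₀)) - 1))` on `[t₀, T]`. -/
theorem sensitivity_norm_bound
    {d : ℕ}
    (u : ℝ → EuclideanSpace ℝ (Fin d))
    (B : ℝ → EuclideanSpace ℝ (Fin d))
    (Cm : ℝ → EuclideanSpace ℝ (Fin d) →L[ℝ] EuclideanSpace ℝ (Fin d))
    (t₀ T Aθ Ax : ℝ) (htT : t₀ ≤ T) (hAθ : 0 < Aθ) (hAx : 0 < Ax)
    (hode : ∀ t ∈ Set.Icc t₀ T, HasDerivAt u (B t + Cm t (u t)) t)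
    (hinit : u t₀ = 0)
    (hB : ∀ t ∈ Set.Icc t₀ T, ‖B t‖ ≤ Aθ)
    (hC : ∀ t ∈ Set.Icc t₀ T, ‖Cm t‖ ≤ Ax) :
    ∀ t ∈ Set.Icc t₀ T,
      ‖u t‖ ≤ Real.sqrt (Aθ / (Aθ + 2 * Ax) * (Real.exp ((Aθ + 2 * Ax) * (T - t₀)) - 1)) := by
  intro t ht
  set K : ℝ := Aθ + 2 * Ax with hKdef
  have hKpos : 0 < K := by positivity
  -- v = ‖u‖² and its derivative
  set v : ℝ → ℝ := fun s => ‖u s‖ ^ 2 with hvdef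
  set v' : ℝ → ℝ := fun s => 2 * inner ℝ (u s) (B s + Cm s (u s)) with hv'def
  have hderiv : ∀ s ∈ Set.Icc t₀ T, HasDerivAt v (v' s) s := by
    intro s hs
    have h := (hode s hs).inner ℝ (hode s hs)
    have h2 : HasDerivAt (fun τ => (inner ℝ (u τ) (u τ) : ℝ))
        (2 * inner ℝ (u s) (B s + Cm s (u s))) s := by
      convert h using 1
      · rfl
      · rfl
      rw [real_inner_comm]
      ring
    have heq : (fun τ => (inner ℝ (u τ) (u τ) : ℝ)) = v := by
      funext τ
      exact real_inner_self_eq_norm_sq _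
    rwa [heq] at h2
  have hcont : ContinuousOn v (Set.Icc t₀ T) :=
    fun s hs => ((hderiv s hs).continuousAt).continuousWithinAt
  have key : ∀ s ∈ Set.Icc t₀ T, v s ≤ gronwallBound 0 K Aθ (s - t₀) := by
    apply le_gronwallBound_of_liminf_deriv_right_le hcont
    · intro x hx r hr
      exact ((hderiv x (Set.Ico_subset_Icc_self hx)).hasDerivWithinAt).liminf_right_slope_le hr
    · simp [hvdef, hinit]
    · intro x hx
      have hx' : x ∈ Set.Icc t₀ T := Set.Ico_subset_Icc_self hx
      have h1 : (inner ℝ (u x) (B x) : ℝ) ≤ ‖u x‖ * Aθ :=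
        (real_inner_le_norm _ _).trans (by
          have := hB x hx'
          nlinarith [norm_nonneg (u x)])
      have h2 : (inner ℝ (u x) (Cm x (u x)) : ℝ) ≤ Ax * ‖u x‖ ^ 2 := by
        refine (real_inner_le_norm _ _).trans ?_
        have hle : ‖Cm x (u x)‖ ≤ Ax * ‖u x‖ := by
          calc ‖Cm x (u x)‖ ≤ ‖Cm x‖ * ‖u x‖ := (Cm x).le_opNorm _
            _ ≤ Ax * ‖u x‖ := by gcongr; exact hC x hx'
        nlinarith [norm_nonneg (u x)]
      have h3 : 2 * ‖u x‖ ≤ 1 + ‖u x‖ ^ 2 := by nlinarith [sq_nonneg (‖u x‖ - 1)]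
      have : v' x = 2 * inner ℝ (u x) (B x) + 2 * inner ℝ (u x) (Cm x (u x)) := by
        simp [hv'def, inner_add_right]; ring
      rw [this]
      have : 2 * (inner ℝ (u x) (B x) : ℝ) ≤ Aθ * (1 + ‖u x‖ ^ 2) := by nlinarith
      simp only [hvdef, hKdef]
      nlinarith
  have hgb : gronwallBound 0 K Aθ (t - t₀) = Aθ / K * (Real.exp (K * (t - t₀)) - 1) := by
    rw [gronwallBound_of_K_ne_0 hKpos.ne']
    ring
  have hmono : Aθ / K * (Real.exp (K * (t - t₀)) - 1) ≤
      Aθ / K * (Real.exp (K * (T - t₀)) - 1) := by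
    have h1 : Real.exp (K * (t - t₀)) ≤ Real.exp (K * (T - t₀)) :=
      Real.exp_le_exp.2 (by nlinarith [ht.2])
    have h2 : (0:ℝ) ≤ Aθ / K := by positivity
    exact mul_le_mul_of_nonneg_left (by linarith) h2
  have hvle : v t ≤ Aθ / K * (Real.exp (K * (T - t₀)) - 1) :=
    (key t ht).trans (by rw [hgb] at *; exact hmono)
  calc ‖u t‖ = Real.sqrt (v t) := by
        simp [hvdef, Real.sqrt_sq (norm_nonneg _)]
    _ ≤ Real.sqrt (Aθ / (Aθ + 2 * Ax) * (Real.exp ((Aθ + 2 * Ax) * (T - t₀)) - 1)) :=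
        Real.sqrt_le_sqrt hvle
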